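/- Define the homogeneous ordered-tree dynamic programming table by C[i,i] = 0 and, for i < j, C[i,j] = min over i ≤ k < j of max(C[i,k], C[k+1,j]) + min(comm(S[i,k]), comm(S[k+1,j])), where comm(s) = α + β·s and S[i,k] = ∑_{t=i}^{k} m_t (ignoring local copy costs, γ = 0). Then C[0,p−1] ≤ ⌈log₂ p⌉·α + β·∑_{i=0}^{p−1} m_i. -/

import Mathlib

open Finset

/-- Sum of block sizes over the consecutive processor range `[i, k]`. -/
noncomputable def segSum (m : ℕ → ℝ) (i k : ℕ) : ℝ := ∑ t ∈ Finset.Icc i k, m t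

/-- Homogeneous ordered-tree dynamic programming table (Figure 5, `γ = 0`):
`C[i,i] = 0` and, for `i < j`,
`C[i,j] = min_{i ≤ k < j} [max(C[i,k], C[k+1,j]) + min(α + β*S[i,k], α + β*S[k+1,j])]`. -/
noncomputable def dpC (m : ℕ → ℝ) (α β : ℝ) : ℕ → ℕ → ℝ
  | i, j =>
    if h : j ≤ i then 0
    else
      ((Finset.Ico i j).attach.inf'
        (Finset.attach_nonempty_iff.mpr (by rw [Finset.nonempty_Ico]; omega)))
        fun k =>
          have hk := Finset.mem_Ico.mp k.2
          max (dpC m α β i k.1) (dpC m α β (k.1 + 1) j) +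
            min (α + β * segSum m i k.1) (α + β * segSum m (k.1 + 1) j)
termination_by i j => j - i
decreasing_by
  · omega
  · omega

lemma segSum_nonneg (m : ℕ → ℝ) (hm : ∀ t, 0 ≤ m t) (i k : ℕ) : 0 ≤ segSum m i k :=
  Finset.sum_nonneg fun t _ => hm t

lemma segSum_split (m : ℕ → ℝ) {i k j : ℕ} (h1 : i ≤ k) (h2 : k < j) :
    segSum m i j = segSum m i k + segSum m (k + 1) j := by
  unfold segSum
  rw [← Finset.Ico_add_one_right_eq_Icc, ← Finset.Ico_add_one_right_eq_Icc, ← Finset.Ico_add_one_right_eq_Icc,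
    ← Finset.sum_Ico_consecutive m (by omega : i ≤ k + 1) (by omega : k + 1 ≤ j + 1)]

lemma key (m : ℕ → ℝ) (hm : ∀ t, 0 ≤ m t) (α β : ℝ) (hα : 0 ≤ α) (hβ : 0 ≤ β) :
    ∀ n i j, j - i ≤ n → i ≤ j →
      dpC m α β i j ≤ (Nat.clog 2 (j - i + 1) : ℝ) * α + β * segSum m i j := by
  intro n
  induction n with
  | zero =>
    intro i j h hij
    have : i = j := by omega
    subst this
    rw [dpC, dif_pos le_rfl]
    simp only [Nat.sub_self]
    have : Nat.clog 2 1 = 0 := Nat.clog_of_right_le_one le_rfl 2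
    rw [this]
    simp only [Nat.cast_zero, zero_mul, zero_add]
    exact mul_nonneg hβ (segSum_nonneg m hm _ _)
  | succ n ih =>
    intro i j h hij
    rcases eq_or_lt_of_le hij with heq | hlt
    · subst heq
      rw [dpC, dif_pos le_rfl]
      simp only [Nat.sub_self]
      have : Nat.clog 2 1 = 0 := Nat.clog_of_right_le_one le_rfl 2
      rw [this]
      simp only [Nat.cast_zero, zero_mul, zero_add]
      exact mul_nonneg hβ (segSum_nonneg m hm i i)
    · -- i < j
      set n' := j - i + 1 with hn'
      have hn2 : 2 ≤ n' := by omega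
      -- choose split point
      set k := i + (n' + 1) / 2 - 1 with hk
      have hik : i ≤ k := by omega
      have hkj : k < j := by omega
      have hkmem : k ∈ Finset.Ico i j := Finset.mem_Ico.mpr ⟨hik, hkj⟩
      have hL : Nat.clog 2 n' = Nat.clog 2 ((n' + 1) / 2) + 1 := by
        have := Nat.clog_of_two_le (by norm_num : 1 < 2) hn2
        simpa using this
      set L := Nat.clog 2 n' with hLdef
      have hL1 : 1 ≤ L := by omega
      -- sizes of subintervals
      have hleft : k - i + 1 ≤ (n' + 1) / 2 := by omega
      have hright : j - (k + 1) + 1 ≤ (n' + 1) / 2 := by omega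
      have hclogL : Nat.clog 2 (k - i + 1) ≤ L - 1 := by
        have := Nat.clog_mono_right 2 hleft; omega
      have hclogR : Nat.clog 2 (j - (k + 1) + 1) ≤ L - 1 := by
        have := Nat.clog_mono_right 2 hright; omega
      have ihL := ih i k (by omega) hik
      have ihR := ih (k + 1) j (by omega) (by omega)
      have hboundL : dpC m α β i k ≤ ((L - 1 : ℕ) : ℝ) * α + β * segSum m i k := by
        refine ihL.trans ?_
        have : ((Nat.clog 2 (k - i + 1) : ℕ) : ℝ) ≤ ((L - 1 : ℕ) : ℝ) := by
          exact_mod_cast hclogL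
        nlinarith [segSum_nonneg m hm i k]
      have hboundR : dpC m α β (k + 1) j ≤ ((L - 1 : ℕ) : ℝ) * α + β * segSum m (k + 1) j := by
        refine ihR.trans ?_
        have : ((Nat.clog 2 (j - (k + 1) + 1) : ℕ) : ℝ) ≤ ((L - 1 : ℕ) : ℝ) := by
          exact_mod_cast hclogR
        nlinarith [segSum_nonneg m hm (k + 1) j]
      have hsplit := segSum_split m hik hkj
      have hLcast : ((L : ℕ) : ℝ) = ((L - 1 : ℕ) : ℝ) + 1 := by
        have : L = (L - 1) + 1 := by omega
        exact_mod_cast congrArg (Nat.cast : ℕ → ℝ) this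
      rw [dpC, dif_neg (by omega : ¬ j ≤ i)]
      refine le_trans (Finset.inf'_le _ (Finset.mem_attach _ ⟨k, hkmem⟩)) ?_
      simp only
      rw [hsplit]
      set Sl := segSum m i k
      set Sr := segSum m (k + 1) j
      have hmax : max (dpC m α β i k) (dpC m α β (k + 1) j)
          ≤ ((L - 1 : ℕ) : ℝ) * α + β * max Sl Sr := by
        refine max_le (hboundL.trans ?_) (hboundR.trans ?_)
        · gcongr; exact le_max_left _ _
        · gcongr; exact le_max_right _ _
      have hmin : min (α + β * Sl) (α + β * Sr) ≤ α + β * min Sl Sr := by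
        rcases le_total Sl Sr with hc | hc
        · rw [min_eq_left hc]; exact min_le_left _ _
        · rw [min_eq_right hc]; exact min_le_right _ _
      have hmm : max Sl Sr + min Sl Sr = Sl + Sr := max_add_min _ _
      have : ((L : ℕ) : ℝ) * α = ((L - 1 : ℕ) : ℝ) * α + α := by
        rw [hLcast]; ring
      calc max (dpC m α β i k) (dpC m α β (k + 1) j) +
            min (α + β * Sl) (α + β * Sr)
          ≤ (((L - 1 : ℕ) : ℝ) * α + β * max Sl Sr) + (α + β * min Sl Sr) :=
            add_le_add hmax hmin
        _ = ((L : ℕ) : ℝ) * α + β * (Sl + Sr) := by rw [this, ← hmm]; ring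

/-- The optimal ordered-tree DP value over `[0, p-1]` is at most the adaptive binomial
tree cost `⌈log₂ p⌉ * α + β * ∑_{i<p} m i`. -/
theorem stmt_11 (p : ℕ) (hp : 1 ≤ p) (m : ℕ → ℝ) (hm : ∀ t, 0 ≤ m t)
    (α β : ℝ) (hα : 0 ≤ α) (hβ : 0 ≤ β) :
    dpC m α β 0 (p - 1) ≤ (Nat.clog 2 p : ℝ) * α + β * ∑ i ∈ Finset.range p, m i := by
  have h := key m hm α β hα hβ (p - 1) 0 (p - 1) (by omega) (by omega)
  have h1 : p - 1 - 0 + 1 = p := by omega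
  have h2 : segSum m 0 (p - 1) = ∑ i ∈ Finset.range p, m i := by
    unfold segSum
    rw [← Finset.Ico_add_one_right_eq_Icc, show p - 1 + 1 = p from by omega, Finset.range_eq_Ico]
  rw [h1, h2] at h
  exact h
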